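/- For every natural number n ≥ 3, the following identity holds in ℚ: T₁(n) + T₂(n) + T₃(n) = 2^{2n−1} + (n−1)·C(2n−2, n−1) − (4/n)·C(2n, n−2) − C(2n, n), where T₁(n) = Σ_{i=2}^{n} Σ_{j=1}^{i−1} C(n−i+j−1, j−1)·C(i−1+n−j, i−1), T₂(n) = Σ_{i=2}^{n} Σ_{j=i}^{n−1} C(i−1+n−j, i−1)·( C(n−i+j, j) − C(n−i+j, j+1) ), and T₃(n) = Σ_{i=2}^{n} Σ_{j=i}^{n} ( Σ_{s=0}^{j−i+1} C(i−1+n−j, i−1)·C(i−1+n−j, s+i)·C(2j−2i, j−i−s+1) − Σ_{s=0}^{j−i−3} C(i−1+n−j, i−1)·C(i−1+n−j, s+i)·C(2j−2i, j−i−s−3) ), inner sums over s being empty when their upper bound is negative. -/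

import Mathlib

open Finset

/-- Binomial coefficient with integer lower index, rational valued. -/
def B (a : ℕ) (b : ℤ) : ℚ :=
  if 0 ≤ b ∧ b ≤ a then ((Nat.choose a b.toNat : ℕ) : ℚ) else 0

lemma Bcast (a b : ℕ) : B a (b : ℤ) = (Nat.choose a b : ℚ) := by
  unfold B
  by_cases h : b ≤ a
  · simp [h]
  · rw [if_neg, Nat.choose_eq_zero_of_lt (by omega)]
    · simp
    · simp; omega

lemma Bneg {a : ℕ} {b : ℤ} (h : b < 0) : B a b = 0 := by
  unfold B; rw [if_neg]; omega

lemma Bgt {a : ℕ} {b : ℤ} (h : (a : ℤ) < b) : B a b = 0 := by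
  unfold B; rw [if_neg]; omega

lemma Bzero (a : ℕ) : B a 0 = 1 := by
  unfold B; simp

lemma Bsymm (a : ℕ) (c : ℤ) : B a ((a : ℤ) - c) = B a c := by
  unfold B
  by_cases h : 0 ≤ c ∧ c ≤ (a : ℤ)
  · rw [if_pos (by omega), if_pos h]
    obtain ⟨c', rfl⟩ : ∃ c' : ℕ, c = (c' : ℤ) := ⟨c.toNat, by omega⟩
    have h1 : ((a : ℤ) - c').toNat = a - c' := by omega
    rw [h1]
    norm_cast
    rw [Nat.choose_symm (by exact_mod_cast h.2)]
  · rw [if_neg (by omega), if_neg h]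

lemma Bpascal (a : ℕ) (b : ℤ) : B (a + 1) b = B a (b - 1) + B a b := by
  unfold B
  by_cases h0 : b < 0
  · rw [if_neg (by omega), if_neg (by omega), if_neg (by omega)]; ring
  by_cases h1 : b = 0
  · subst h1
    rw [if_pos (by constructor <;> omega), if_neg (by omega), if_pos (by constructor <;> omega)]
    simp
  by_cases h2 : (a : ℤ) + 1 < b
  · rw [if_neg (by omega), if_neg (by omega), if_neg (by omega)]; ring
  -- now 1 ≤ b ≤ a + 1
  obtain ⟨b', rfl⟩ : ∃ b' : ℕ, b = ((b' : ℤ) + 1) := ⟨(b - 1).toNat, by omega⟩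
  rw [if_pos (by omega)]
  have e1 : ((b' : ℤ) + 1 - 1).toNat = b' := by omega
  have e2 : ((b' : ℤ) + 1).toNat = b' + 1 := by omega
  rw [e1, e2]
  by_cases h3 : (b' : ℤ) + 1 ≤ (a : ℤ)
  · rw [if_pos (by omega), if_pos (by omega)]
    rw [Nat.choose_succ_succ]
    push_cast; ring
  · -- b' + 1 = a + 1, i.e. b' = a
    have hba : b' = a := by omega
    subst hba
    rw [if_pos (by omega), if_neg (by omega)]
    simp [Nat.choose_self]

lemma Bvand (p q : ℕ) (k : ℤ) :
    ∑ x ∈ range (p + 1), B p (x : ℤ) * B q (k - x) = B (p + q) k := by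
  induction p generalizing k with
  | zero => simp [Bzero]
  | succ p ih =>
    have step : ∀ x ∈ range (p + 2), B (p+1) (x:ℤ) * B q (k - x)
        = B p ((x:ℤ) - 1) * B q (k - x) + B p (x:ℤ) * B q (k - x) := by
      intro x _; rw [Bpascal]; ring
    rw [Finset.sum_congr rfl step, Finset.sum_add_distrib]
    have A1 : ∑ x ∈ range (p + 2), B p ((x:ℤ) - 1) * B q (k - x) = B (p + q) (k - 1) := by
      rw [Finset.sum_range_succ']
      simp only [Nat.cast_add, Nat.cast_one, add_sub_cancel_right]
      rw [Bneg (by norm_num : ((0:ℕ):ℤ) - 1 < 0)]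
      have : ∀ x ∈ range (p+1), B p (x:ℤ) * B q (k - ((x:ℤ)+1)) = B p (x:ℤ) * B q ((k-1) - x) := by
        intro x _; congr 1; congr 1; ring
      rw [Finset.sum_congr rfl this]
      simp [ih]
    have A2 : ∑ x ∈ range (p + 2), B p (x:ℤ) * B q (k - x) = B (p + q) k := by
      rw [Finset.sum_range_succ, Bgt (by exact_mod_cast lt_add_one (p:ℤ))]
      simp [ih]
    rw [A1, A2]
    have : p + 1 + q = (p + q) + 1 := by omega
    rw [this, Bpascal]

lemma BvandPad (p q : ℕ) (k : ℤ) (M : ℕ) (hM : p ≤ M) :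
    ∑ x ∈ range (M + 1), B p (x : ℤ) * B q (k - x) = B (p + q) k := by
  rw [← Bvand p q k]
  symm
  apply Finset.sum_subset
  · intro x hx; simp at hx ⊢; omega
  · intro x _ hx
    simp at hx
    rw [Bgt (by exact_mod_cast hx), zero_mul]

/-- Hockey stick, Ico form, in ℚ. -/
lemma hockey (k a : ℕ) : ∀ b, a ≤ b →
    ∑ u ∈ Ico a b, (Nat.choose u k : ℚ) = (Nat.choose b (k+1) : ℚ) - (Nat.choose a (k+1) : ℚ) := by
  intro b
  induction b with
  | zero => intro h; interval_cases a; simp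
  | succ b ih =>
    intro h
    rcases Nat.lt_or_ge a (b+1) with h1 | h1
    · have hab : a ≤ b := by omega
      rw [Finset.sum_Ico_succ_top hab, ih hab, Nat.choose_succ_succ (b) k]
      push_cast; ring
    · have : a = b + 1 := by omega
      subst this; simp

lemma telescope2 (g : ℕ → ℚ) : ∀ T, ∑ t ∈ range T, (g t - g (t+2)) = g 0 + g 1 - g T - g (T+1) := by
  intro T
  induction T with
  | zero => simp
  | succ T ih => rw [Finset.sum_range_succ, ih]; ring

/-- partial sum of row 2m+1 binomials -/
def psum (m R : ℕ) : ℚ := ∑ r ∈ range R, (Nat.choose (2*m+1) r : ℚ)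

lemma psum_zero (m : ℕ) : psum m 0 = 0 := by simp [psum]

lemma psumrec (m : ℕ) : ∀ R, ∑ r ∈ range R, (Nat.choose (2*m+3) r : ℚ)
    = psum m R + 2 * psum m (R - 1) + psum m (R - 2) := by
  intro R
  induction R with
  | zero => simp [psum]
  | succ R ih =>
    match R, ih with
    | 0, _ => simp [psum]
    | 1, _ =>
      simp [psum, Finset.sum_range_succ, Nat.choose_one_right]
      push_cast; ring
    | (r+2), ih =>
      rw [Finset.sum_range_succ, ih]
      have e1 : r + 2 + 1 - 1 = r + 2 := rfl
      have e2 : r + 2 - 1 = r + 1 := rfl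
      have e3 : r + 2 + 1 - 2 = r + 1 := rfl
      have e4 : r + 2 - 2 = r := rfl
      rw [e1, e2, e3, e4]
      have expand : (Nat.choose (2*m+3) (r+2) : ℚ)
          = Nat.choose (2*m+1) (r+2) + 2 * Nat.choose (2*m+1) (r+1) + Nat.choose (2*m+1) r := by
        have h1 : 2*m+3 = (2*m+2)+1 := by ring
        have h2 : 2*m+2 = (2*m+1)+1 := by ring
        rw [h1, Nat.choose_succ_succ ((2*m)+2) (r+1), h2,
          Nat.choose_succ_succ ((2*m)+1) r, Nat.choose_succ_succ ((2*m)+1) (r+1)]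
        push_cast; ring
      rw [expand]
      simp only [psum, Finset.sum_range_succ]
      push_cast; ring

/-- `ψ(m,k-1) = ψ(m,k+1) + C(2m+2, m+1+k)` in range form. -/
lemma psum_jump (m k : ℕ) :
    psum m (m + 2 - k) = psum m (m - k) + (Nat.choose (2*m+2) (m+1+k) : ℚ) := by
  rcases Nat.lt_or_ge (m+1) k with h | h
  · -- k ≥ m+2 : both psums are psum m 0... m+2-k = 0, m-k = 0
    have e1 : m + 2 - k = 0 := by omega
    have e2 : m - k = 0 := by omega
    rw [e1, e2, Nat.choose_eq_zero_of_lt (by omega)]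
    simp
  rcases Nat.eq_or_lt_of_le h with h1 | h1
  · -- k = m+1
    subst h1
    have e1 : m + 2 - (m+1) = 1 := by omega
    have e2 : m - (m+1) = 0 := by omega
    rw [e1, e2]
    simp [psum]
    rw [show m+1+(m+1) = 2*m+2 by ring, Nat.choose_self]
    norm_num
  · -- k ≤ m
    have e1 : m + 2 - k = (m - k) + 2 := by omega
    rw [e1]
    simp only [psum, Finset.sum_range_succ]
    have key : (Nat.choose (2*m+2) (m+1+k) : ℚ)
        = Nat.choose (2*m+1) (m-k) + Nat.choose (2*m+1) (m-k+1) := by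
      have symm1 : Nat.choose (2*m+2) (m+1+k) = Nat.choose (2*m+2) (m+1-k) := by
        rw [← Nat.choose_symm (by omega : m+1+k ≤ 2*m+2)]
        congr 1; omega
      rw [symm1, show m+1-k = (m-k)+1 by omega, show 2*m+2 = (2*m+1)+1 by ring,
        Nat.choose_succ_succ]
      push_cast; ring
    rw [key]; ring

lemma Bpascal2 (a : ℕ) (z : ℤ) :
    B (2*a+2) z = B (2*a) (z-2) + 2 * B (2*a) (z-1) + B (2*a) z := by
  rw [show 2*a+2 = (2*a+1)+1 by ring, Bpascal, show (2*a+1) = (2*a)+1 by rfl, Bpascal, Bpascal]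
  have : z - 1 - 1 = z - 2 := by ring
  rw [this]; ring

lemma Aphi (m : ℕ) : ∀ i k : ℕ,
    ∑ d ∈ range (m+1), B (2*(m-d)) (((m-d : ℕ) : ℤ) + (i:ℤ)) * B (2*d) ((d : ℤ) + (k:ℤ))
      = psum m (m+1-(i+k)) := by
  induction m with
  | zero =>
    intro i k
    simp only [Finset.range_one, Finset.sum_singleton, Nat.sub_zero, Nat.zero_sub,
      Nat.cast_zero, Nat.mul_zero, zero_add]
    rcases i with _ | i
    · rcases k with _ | k
      · simp [Bzero, psum]
      · rw [Bgt (by push_cast; omega : ((0:ℕ):ℤ) < ((k+1:ℕ):ℤ)), mul_zero,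
          show 0 + 1 - (0+(k+1)) = 0 by omega, psum_zero]
    · rw [Bgt (by push_cast; omega : ((0:ℕ):ℤ) < ((i+1:ℕ):ℤ)), zero_mul,
        show 0 + 1 - (i+1+k) = 0 by omega, psum_zero]
  | succ m ih =>
    intro i k
    rw [Finset.sum_range_succ]
    have hlast : B (2*(m+1-(m+1))) (((m+1-(m+1) : ℕ):ℤ) + (i:ℤ)) * B (2*(m+1)) (((m+1 : ℕ):ℤ) + (k:ℤ))
        = (if i = 0 then (Nat.choose (2*m+2) (m+1+k) : ℚ) else 0) := by
      have e : m+1-(m+1) = 0 := by omega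
      rw [e]
      rcases i with _ | i
      · rw [if_pos rfl, show 2*0 = 0 by norm_num,
          show (((0:ℕ)):ℤ) + (((0:ℕ)):ℤ) = ((0:ℕ):ℤ) by norm_num, Bcast,
          show ((m+1:ℕ):ℤ) + (k:ℤ) = ((m+1+k:ℕ):ℤ) by push_cast; ring,
          show 2*(m+1) = 2*m+2 by ring, Bcast]
        simp
      · rw [if_neg (by omega), Bgt (by push_cast; omega), zero_mul]
    rw [hlast]
    have split : ∀ d ∈ range (m+1),
        B (2*(m+1-d)) (((m+1-d : ℕ):ℤ) + (i:ℤ)) * B (2*d) ((d:ℤ) + (k:ℤ))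
        = B (2*(m-d)) (((m-d:ℕ):ℤ) + (i:ℤ) - 1) * B (2*d) ((d:ℤ) + (k:ℤ))
          + 2 * (B (2*(m-d)) (((m-d:ℕ):ℤ) + (i:ℤ)) * B (2*d) ((d:ℤ) + (k:ℤ)))
          + B (2*(m-d)) (((m-d:ℕ):ℤ) + (i:ℤ) + 1) * B (2*d) ((d:ℤ) + (k:ℤ)) := by
      intro d hd
      simp only [mem_range] at hd
      have h1 : 2*(m+1-d) = 2*(m-d)+2 := by omega
      have h2 : ((m+1-d : ℕ) : ℤ) = ((m-d : ℕ) : ℤ) + 1 := by omega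
      rw [h1, h2, Bpascal2]
      have e1 : ((m-d:ℕ):ℤ) + 1 + (i:ℤ) - 2 = ((m-d:ℕ):ℤ) + (i:ℤ) - 1 := by ring
      have e2 : ((m-d:ℕ):ℤ) + 1 + (i:ℤ) - 1 = ((m-d:ℕ):ℤ) + (i:ℤ) := by ring
      have e3 : ((m-d:ℕ):ℤ) + 1 + (i:ℤ) = ((m-d:ℕ):ℤ) + (i:ℤ) + 1 := by ring
      rw [e1, e2, e3]
      try ring
    rw [Finset.sum_congr rfl split, Finset.sum_add_distrib, Finset.sum_add_distrib,
      ← Finset.mul_sum]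
    have S3 : ∑ d ∈ range (m+1), B (2*(m-d)) (((m-d:ℕ):ℤ) + (i:ℤ) + 1) * B (2*d) ((d:ℤ) + (k:ℤ))
        = psum m (m+1-(i+1+k)) := by
      rw [← ih (i+1) k]
      apply Finset.sum_congr rfl
      intro d _
      rw [show ((m-d:ℕ):ℤ) + (i:ℤ) + 1 = ((m-d:ℕ):ℤ) + ((i+1:ℕ):ℤ) by push_cast; ring]
    rcases i with _ | i
    · have S1 : ∑ d ∈ range (m+1), B (2*(m-d)) (((m-d:ℕ):ℤ) + ((0:ℕ):ℤ) - 1) * B (2*d) ((d:ℤ) + (k:ℤ))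
          = psum m (m+1-(1+k)) := by
        rw [← ih 1 k]
        apply Finset.sum_congr rfl
        intro d _
        congr 1
        rw [show ((m-d:ℕ):ℤ) + ((0:ℕ):ℤ) - 1 = (↑(2*(m-d)) : ℤ) - (((m-d:ℕ):ℤ) + ((1:ℕ):ℤ)) by push_cast; ring]
        rw [Bsymm]
      rw [S1, S3, ih 0 k, if_pos rfl]
      have h0 : psum (m+1) (m+1+1-(0+k)) = ∑ r ∈ range (m+2-k), (Nat.choose (2*m+3) r : ℚ) := by
        rw [show m+1+1-(0+k) = m+2-k by omega]
        apply Finset.sum_congr rfl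
        intro r _
        norm_num [show 2*(m+1)+1 = 2*m+3 by ring]
      rw [h0, psumrec, show m+2-k-1 = m+1-k by omega, show m+2-k-2 = m-k by omega, psum_jump,
        show m+1-(0+1+k) = m-k by omega, show m+1-(0+k) = m+1-k by omega]
      ring
    · have S1 : ∑ d ∈ range (m+1), B (2*(m-d)) (((m-d:ℕ):ℤ) + ((i+1:ℕ):ℤ) - 1) * B (2*d) ((d:ℤ) + (k:ℤ))
          = psum m (m+1-(i+k)) := by
        rw [← ih i k]
        apply Finset.sum_congr rfl
        intro d _
        congr 1
        push_cast; ring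
      rw [S1, S3, ih (i+1) k, if_neg (by omega)]
      have h0 : psum (m+1) (m+1+1-(i+1+k)) = ∑ r ∈ range (m+1-(i+k)), (Nat.choose (2*m+3) r : ℚ) := by
        rw [show m+1+1-(i+1+k) = m+1-(i+k) by omega]
        apply Finset.sum_congr rfl
        intro r _
        norm_num [show 2*(m+1)+1 = 2*m+3 by ring]
      rw [h0, psumrec, show m+1-(i+k)-1 = m+1-(i+1+k) by omega,
        show m+1-(i+k)-2 = m+1-(i+1+1+k) by omega]
      ring

lemma sum_comm_dep {S S' : Finset ℕ} {T T' : ℕ → Finset ℕ} (f : ℕ → ℕ → ℚ)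
    (h : ∀ i k : ℕ, (i ∈ S ∧ k ∈ T i) ↔ (k ∈ S' ∧ i ∈ T' k)) :
    ∑ i ∈ S, ∑ k ∈ T i, f i k = ∑ k ∈ S', ∑ i ∈ T' k, f i k := by
  rw [Finset.sum_sigma', Finset.sum_sigma']
  refine Finset.sum_nbij' (fun p => ⟨p.2, p.1⟩) (fun p => ⟨p.2, p.1⟩) ?_ ?_ ?_ ?_ ?_
  · rintro ⟨a, b⟩ hab
    simp only [Finset.mem_sigma] at hab ⊢
    exact (h a b).1 hab
  · rintro ⟨a, b⟩ hab
    simp only [Finset.mem_sigma] at hab ⊢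
    exact (h b a).2 hab
  · rintro ⟨a, b⟩ _; rfl
  · rintro ⟨a, b⟩ _; rfl
  · rintro ⟨a, b⟩ _; rfl

lemma vand_tail (p q R : ℕ) :
    ∑ x ∈ range R, B p (x:ℤ) * B q ((R:ℤ) - x) = B (p+q) (R:ℤ) - B p (R:ℤ) := by
  have big := BvandPad p q (R:ℤ) (p+R) (by omega)
  rw [← big]
  have hsplit : range (p+R+1) = Ico 0 (p+R+1) := by rw [Finset.range_eq_Ico]
  rw [hsplit, ← Finset.sum_Ico_consecutive _ (by omega : 0 ≤ R) (by omega : R ≤ p+R+1)]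
  have tail : ∑ x ∈ Ico R (p+R+1), B p (x:ℤ) * B q ((R:ℤ) - x) = B p (R:ℤ) := by
    rw [Finset.sum_eq_single_of_mem R (by simp)]
    · rw [show (R:ℤ) - (R:ℤ) = 0 by ring, Bzero, mul_one]
    · intro x hx hne
      simp only [Finset.mem_Ico] at hx
      rw [Bneg (by omega : (R:ℤ) - x < 0), mul_zero]
  rw [tail, ← Finset.range_eq_Ico]
  ring

lemma innerI (N t : ℕ) :
    ∑ i ∈ Icc 2 (N+1), (Nat.choose N (i-1) : ℚ) * (Nat.choose N (t+i) : ℚ)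
      = B (2*N) ((N:ℤ)+1+(t:ℤ)) - (Nat.choose N (t+1) : ℚ) := by
  rw [← Finset.Ico_add_one_right_eq_Icc, Finset.sum_Ico_eq_sum_range, show N+1+1-2 = N by omega]
  have step1 : ∀ x ∈ range N, (Nat.choose N (2+x-1) : ℚ) * (Nat.choose N (t+(2+x)) : ℚ)
      = B N ((x:ℤ)+1) * B N ((t:ℤ)+2+x) := by
    intro x _
    rw [show 2+x-1 = x+1 by omega, show t+(2+x) = t+2+x by omega,
      show (x:ℤ)+1 = ((x+1:ℕ):ℤ) by push_cast; ring,
      show (t:ℤ)+2+(x:ℤ) = ((t+2+x:ℕ):ℤ) by push_cast; ring, Bcast, Bcast]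
  rw [Finset.sum_congr rfl step1]
  have refl := Finset.sum_range_reflect (fun x => B N ((x:ℤ)+1) * B N ((t:ℤ)+2+x)) N
  rw [← refl]
  have step2 : ∀ x ∈ range N, B N (((N-1-x : ℕ):ℤ)+1) * B N ((t:ℤ)+2+((N-1-x : ℕ):ℤ))
      = B N ((x:ℤ)) * B N (((N:ℤ)+1+t) - x) := by
    intro x hx
    simp only [mem_range] at hx
    have c1 : ((N-1-x : ℕ):ℤ) = (N:ℤ)-1-x := by omega
    rw [c1, show (N:ℤ)-1-(x:ℤ)+1 = (N:ℤ)-(x:ℤ) by ring]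
    rw [show (N:ℤ)-(x:ℤ) = (N:ℤ) - (x:ℤ) from rfl]
    rw [Bsymm N (x:ℤ)]
    congr 1
    ring
  rw [Finset.sum_congr rfl step2]
  have vand := Bvand N N ((N:ℤ)+1+t)
  rw [Finset.sum_range_succ] at vand
  have last : B N ((N:ℤ)) * B N ((N:ℤ)+1+(t:ℤ) - N) = (Nat.choose N (t+1) : ℚ) := by
    rw [show (N:ℤ)+1+(t:ℤ)-(N:ℤ) = ((t+1 : ℕ):ℤ) by push_cast; ring,
      show (N:ℤ) = ((N:ℕ):ℤ) from rfl, Bcast, Bcast, Nat.choose_self]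
    norm_num
  rw [last] at vand
  rw [show 2*N = N+N by ring]
  linarith [vand]

lemma PPeval (m : ℕ) :
    ∑ e ∈ range m, (∑ t ∈ range (m+2), B (2*(m-e)) (((m-e:ℕ):ℤ)+1+(t:ℤ)) * B (2*e) ((e:ℤ)+1-t)
      - ∑ t ∈ range (m+2), B (2*(m-e)) (((m-e:ℕ):ℤ)+1+(t:ℤ)) * B (2*e) ((e:ℤ)-3-t))
    = 2 * psum m (m-1) := by
  have combine : ∀ e ∈ range m,
      (∑ t ∈ range (m+2), B (2*(m-e)) (((m-e:ℕ):ℤ)+1+(t:ℤ)) * B (2*e) ((e:ℤ)+1-t)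
      - ∑ t ∈ range (m+2), B (2*(m-e)) (((m-e:ℕ):ℤ)+1+(t:ℤ)) * B (2*e) ((e:ℤ)-3-t))
      = ∑ t ∈ range (m+2), (B (2*(m-e)) (((m-e:ℕ):ℤ)+1+(t:ℤ)) * B (2*e) ((e:ℤ)-1+t)
          - B (2*(m-e)) (((m-e:ℕ):ℤ)+1+(t:ℤ)) * B (2*e) ((e:ℤ)+3+t)) := by
    intro e _
    rw [← Finset.sum_sub_distrib]
    apply Finset.sum_congr rfl
    intro t _
    rw [show (e:ℤ)+1-t = ((2*e:ℕ):ℤ) - ((e:ℤ)-1+t) by push_cast; ring, Bsymm,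
      show (e:ℤ)-3-t = ((2*e:ℕ):ℤ) - ((e:ℤ)+3+t) by push_cast; ring, Bsymm]
  rw [Finset.sum_congr rfl combine, Finset.sum_comm]
  -- now outer t ∈ range (m+2), inner e ∈ range m
  have extend : ∀ t ∈ range (m+2),
      ∑ e ∈ range m, (B (2*(m-e)) (((m-e:ℕ):ℤ)+1+(t:ℤ)) * B (2*e) ((e:ℤ)-1+t)
          - B (2*(m-e)) (((m-e:ℕ):ℤ)+1+(t:ℤ)) * B (2*e) ((e:ℤ)+3+t))
      = ∑ e ∈ range (m+1), (B (2*(m-e)) (((m-e:ℕ):ℤ)+1+(t:ℤ)) * B (2*e) ((e:ℤ)-1+t)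
          - B (2*(m-e)) (((m-e:ℕ):ℤ)+1+(t:ℤ)) * B (2*e) ((e:ℤ)+3+t)) := by
    intro t _
    rw [Finset.sum_range_succ]
    rw [show m - m = 0 by omega]
    rw [Bgt (by push_cast; omega : ((2*0:ℕ):ℤ) < ((0:ℕ):ℤ)+1+(t:ℤ))]
    ring
  rw [Finset.sum_congr rfl extend, Finset.sum_range_succ']
  -- first the t = t'+1 part, then the t = 0 part
  have inner_eval : ∀ t' ∈ range (m+1),
      ∑ e ∈ range (m+1), (B (2*(m-e)) (((m-e:ℕ):ℤ)+1+((t'+1:ℕ):ℤ)) * B (2*e) ((e:ℤ)-1+((t'+1:ℕ):ℤ))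
          - B (2*(m-e)) (((m-e:ℕ):ℤ)+1+((t'+1:ℕ):ℤ)) * B (2*e) ((e:ℤ)+3+((t'+1:ℕ):ℤ)))
      = (fun s => psum m (m+1-(2*s+2))) t' - (fun s => psum m (m+1-(2*s+2))) (t'+2) := by
    intro t' _
    rw [Finset.sum_sub_distrib]
    have A1 : ∑ e ∈ range (m+1), B (2*(m-e)) (((m-e:ℕ):ℤ)+1+((t'+1:ℕ):ℤ)) * B (2*e) ((e:ℤ)-1+((t'+1:ℕ):ℤ))
        = psum m (m+1-(t'+2+t')) := by
      rw [← Aphi m (t'+2) t']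
      apply Finset.sum_congr rfl
      intro e _
      rw [show ((e:ℤ))-1+((t'+1:ℕ):ℤ) = (e:ℤ)+((t':ℕ):ℤ) by push_cast; ring,
        show ((m-e:ℕ):ℤ)+1+((t'+1:ℕ):ℤ) = ((m-e:ℕ):ℤ)+((t'+2:ℕ):ℤ) by push_cast; ring]
    have A3 : ∑ e ∈ range (m+1), B (2*(m-e)) (((m-e:ℕ):ℤ)+1+((t'+1:ℕ):ℤ)) * B (2*e) ((e:ℤ)+3+((t'+1:ℕ):ℤ))
        = psum m (m+1-(t'+2+(t'+4))) := by
      rw [← Aphi m (t'+2) (t'+4)]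
      apply Finset.sum_congr rfl
      intro e _
      rw [show ((e:ℤ))+3+((t'+1:ℕ):ℤ) = (e:ℤ)+((t'+4:ℕ):ℤ) by push_cast; ring,
        show ((m-e:ℕ):ℤ)+1+((t'+1:ℕ):ℤ) = ((m-e:ℕ):ℤ)+((t'+2:ℕ):ℤ) by push_cast; ring]
    rw [A1, A3]
    simp only
    rw [show m+1-(t'+2+t') = m+1-(2*t'+2) by omega,
      show m+1-(t'+2+(t'+4)) = m+1-(2*(t'+2)+2) by omega]
  rw [Finset.sum_congr rfl inner_eval, telescope2]
  have t0 : ∑ e ∈ range (m+1), (B (2*(m-e)) (((m-e:ℕ):ℤ)+1+((0:ℕ):ℤ)) * B (2*e) ((e:ℤ)-1+((0:ℕ):ℤ))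
          - B (2*(m-e)) (((m-e:ℕ):ℤ)+1+((0:ℕ):ℤ)) * B (2*e) ((e:ℤ)+3+((0:ℕ):ℤ)))
      = psum m (m-1) - psum m (m-3) := by
    rw [Finset.sum_sub_distrib]
    have A1 : ∑ e ∈ range (m+1), B (2*(m-e)) (((m-e:ℕ):ℤ)+1+((0:ℕ):ℤ)) * B (2*e) ((e:ℤ)-1+((0:ℕ):ℤ))
        = psum m (m+1-2) := by
      rw [← Aphi m 1 1]
      apply Finset.sum_congr rfl
      intro e _
      rw [show ((e:ℤ))-1+((0:ℕ):ℤ) = ((2*e:ℕ):ℤ) - ((e:ℤ)+((1:ℕ):ℤ)) by push_cast; ring, Bsymm,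
        show ((m-e:ℕ):ℤ)+1+((0:ℕ):ℤ) = ((m-e:ℕ):ℤ)+((1:ℕ):ℤ) by push_cast; ring]
    have A3 : ∑ e ∈ range (m+1), B (2*(m-e)) (((m-e:ℕ):ℤ)+1+((0:ℕ):ℤ)) * B (2*e) ((e:ℤ)+3+((0:ℕ):ℤ))
        = psum m (m+1-4) := by
      rw [← Aphi m 1 3]
      apply Finset.sum_congr rfl
      intro e _
      rw [show ((e:ℤ))+3+((0:ℕ):ℤ) = (e:ℤ)+((3:ℕ):ℤ) by push_cast; ring,
        show ((m-e:ℕ):ℤ)+1+((0:ℕ):ℤ) = ((m-e:ℕ):ℤ)+((1:ℕ):ℤ) by push_cast; ring]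
    rw [A1, A3, show m+1-2 = m-1 by omega, show m+1-4 = m-3 by omega]
  rw [t0]
  rw [show m+1-(2*0+2) = m-1 by omega, show m+1-(2*1+2) = m-3 by omega,
    show m+1-(2*(m+1)+2) = 0 by omega, show m+1-(2*(m+1+1)+2) = 0 by omega, psum_zero]
  ring

lemma Q1eval (N e : ℕ) :
    ∑ t ∈ range (e+2), (Nat.choose N (t+1) : ℚ) * B (2*e) ((e:ℤ)+1-t)
      = B (2*e+N) ((e:ℤ)+2) - B (2*e) ((e:ℤ)+2) := by
  have refl := Finset.sum_range_reflect
    (fun t => (Nat.choose N (t+1) : ℚ) * B (2*e) ((e:ℤ)+1-t)) (e+2)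
  rw [← refl]
  have step : ∀ x ∈ range (e+2),
      (Nat.choose N (e+2-1-x+1) : ℚ) * B (2*e) ((e:ℤ)+1-((e+2-1-x : ℕ):ℤ))
      = B (2*e) (x:ℤ) * B N (((e+2:ℕ):ℤ) - x) := by
    intro x hx
    simp only [mem_range] at hx
    rw [show ((e+2-1-x : ℕ):ℤ) = (e:ℤ)+1-x by omega,
      show (e:ℤ)+1-((e:ℤ)+1-x) = (x:ℤ) by ring,
      show e+2-1-x+1 = e+2-x by omega,
      show ((e+2:ℕ):ℤ) - (x:ℤ) = ((e+2-x : ℕ):ℤ) by omega, Bcast, Bcast]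
    ring
  rw [Finset.sum_congr rfl step, vand_tail (2*e) N (e+2)]
  rw [show ((e+2:ℕ):ℤ) = (e:ℤ)+2 by push_cast; ring]

lemma Q2eval (N e : ℕ) :
    ∑ t ∈ range (e-2), (Nat.choose N (t+1) : ℚ) * B (2*e) ((e:ℤ)-3-t)
      = B (2*e+N) ((e:ℤ)-2) - B (2*e) ((e:ℤ)-2) := by
  match e with
  | 0 =>
    have hb : ∀ a : ℕ, B a (-2 : ℤ) = 0 := fun a => Bneg (by norm_num)
    norm_num [hb]
  | 1 =>
    have hb : ∀ a : ℕ, B a (-1 : ℤ) = 0 := fun a => Bneg (by norm_num)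
    norm_num [hb]
  | 2 =>
    rw [show (((2:ℕ)):ℤ)-2 = 0 by norm_num, Bzero, Bzero]
    simp
  | (e'+3) =>
    rw [show e'+3-2 = e'+1 by omega]
    have refl := Finset.sum_range_reflect
      (fun t => (Nat.choose N (t+1) : ℚ) * B (2*(e'+3)) (((e'+3:ℕ):ℤ)-3-t)) (e'+1)
    rw [← refl]
    have step : ∀ x ∈ range (e'+1),
        (Nat.choose N (e'+1-1-x+1) : ℚ) * B (2*(e'+3)) (((e'+3:ℕ):ℤ)-3-((e'+1-1-x : ℕ):ℤ))
        = B (2*(e'+3)) (x:ℤ) * B N (((e'+1:ℕ):ℤ) - x) := by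
      intro x hx
      simp only [mem_range] at hx
      rw [show ((e'+1-1-x : ℕ):ℤ) = (e':ℤ)-x by omega,
        show ((e'+3:ℕ):ℤ)-3-((e':ℤ)-x) = (x:ℤ) by push_cast; ring,
        show e'+1-1-x+1 = e'+1-x by omega,
        show ((e'+1:ℕ):ℤ) - (x:ℤ) = ((e'+1-x : ℕ):ℤ) by omega, Bcast, Bcast]
      ring
    rw [Finset.sum_congr rfl step, vand_tail (2*(e'+3)) N (e'+1)]
    rw [show ((e'+1:ℕ):ℤ) = ((e'+3:ℕ):ℤ)-2 by push_cast; ring]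

lemma HS1 (n : ℕ) (hn : 3 ≤ n) :
    ∑ e ∈ range (n-1), B (n-1+e) ((e:ℤ)+2) = (Nat.choose (2*n-2) (n-2) : ℚ) - ((n:ℚ)-1) := by
  have step : ∀ e ∈ range (n-1),
      B (n-1+e) ((e:ℤ)+2) = (Nat.choose (n-1+e) (n-3) : ℚ) := by
    intro e _
    rw [show (e:ℤ)+2 = ((n-1+e:ℕ):ℤ) - ((n-3:ℕ):ℤ) by omega, Bsymm, Bcast]
  rw [Finset.sum_congr rfl step]
  have ico := Finset.sum_Ico_eq_sum_range (fun u => (Nat.choose u (n-3) : ℚ)) (n-1) (2*n-2)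
  rw [show 2*n-2-(n-1) = n-1 by omega] at ico
  rw [← ico, hockey (n-3) (n-1) (2*n-2) (by omega),
    show n-3+1 = n-2 by omega]
  have : Nat.choose (n-1) (n-2) = n-1 := by
    rw [← Nat.choose_symm (by omega : n-2 ≤ n-1), show n-1-(n-2) = 1 by omega,
      Nat.choose_one_right]
  rw [this, Nat.cast_sub (by omega : 1 ≤ n)]
  norm_num

lemma HS2 (n : ℕ) (hn : 3 ≤ n) :
    ∑ e ∈ range (n-1), B (n-1+e) ((e:ℤ)-2) = (Nat.choose (2*n-2) (n+2) : ℚ) := by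
  have step : ∀ e ∈ range (n-1),
      B (n-1+e) ((e:ℤ)-2) = (Nat.choose (n-1+e) (n+1) : ℚ) := by
    intro e _
    rw [show (e:ℤ)-2 = ((n-1+e:ℕ):ℤ) - ((n+1:ℕ):ℤ) by omega, Bsymm, Bcast]
  rw [Finset.sum_congr rfl step]
  have ico := Finset.sum_Ico_eq_sum_range (fun u => (Nat.choose u (n+1) : ℚ)) (n-1) (2*n-2)
  rw [show 2*n-2-(n-1) = n-1 by omega] at ico
  rw [← ico, hockey (n+1) (n-1) (2*n-2) (by omega),
    show n+1+1 = n+2 by omega, Nat.choose_eq_zero_of_lt (by omega : n-1 < n+2)]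
  simp

lemma T1eq (n : ℕ) (hn : 3 ≤ n) :
    (∑ i ∈ Finset.Icc 2 n, ∑ j ∈ Finset.Icc 1 (i - 1),
        (Nat.choose (n - i + j - 1) (j - 1) : ℚ) * (Nat.choose (i - 1 + n - j) (i - 1) : ℚ))
    = ((n:ℚ) - 1) * (Nat.choose (2*n-2) (n-1) : ℚ) := by
  have inner_reflect : ∀ i ∈ Finset.Icc 2 n,
      ∑ j ∈ Finset.Icc 1 (i - 1),
        (Nat.choose (n - i + j - 1) (j - 1) : ℚ) * (Nat.choose (i - 1 + n - j) (i - 1) : ℚ)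
      = ∑ k ∈ Finset.Icc 1 (i - 1),
        (Nat.choose (n - k - 1) (i - k - 1) : ℚ) * (Nat.choose (n - 1 + k) (i - 1) : ℚ) := by
    intro i hi
    simp only [Finset.mem_Icc] at hi
    refine Finset.sum_nbij' (fun j => i - j) (fun k => i - k) ?_ ?_ ?_ ?_ ?_
    · intro j hj; simp only [Finset.mem_Icc] at hj ⊢; omega
    · intro k hk; simp only [Finset.mem_Icc] at hk ⊢; omega
    · intro j hj; simp only [Finset.mem_Icc] at hj; show i - (i - j) = j; omega
    · intro k hk; simp only [Finset.mem_Icc] at hk; show i - (i - k) = k; omega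
    · intro j hj
      simp only [Finset.mem_Icc] at hj
      rw [show n - (i-j) - 1 = n - i + j - 1 by omega, show i - (i-j) - 1 = j - 1 by omega,
        show n - 1 + (i-j) = i - 1 + n - j by omega]
  rw [Finset.sum_congr rfl inner_reflect]
  rw [sum_comm_dep _ (fun i k => by
    simp only [Finset.mem_Icc]
    constructor
    · rintro ⟨h1, h2⟩; omega
    · rintro ⟨h1, h2⟩; omega : ∀ i k : ℕ,
      (i ∈ Finset.Icc 2 n ∧ k ∈ Finset.Icc 1 (i-1)) ↔
      (k ∈ Finset.Icc 1 (n-1) ∧ i ∈ Finset.Icc (k+1) n))]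
  have inner_eval : ∀ k ∈ Finset.Icc 1 (n-1),
      ∑ i ∈ Finset.Icc (k+1) n,
        (Nat.choose (n - k - 1) (i - k - 1) : ℚ) * (Nat.choose (n - 1 + k) (i - 1) : ℚ)
      = (Nat.choose (2*n-2) (n-1) : ℚ) := by
    intro k hk
    simp only [Finset.mem_Icc] at hk
    rw [← Finset.Ico_add_one_right_eq_Icc, Finset.sum_Ico_eq_sum_range,
      show n+1-(k+1) = (n-k-1)+1 by omega]
    have step : ∀ x ∈ range ((n-k-1)+1),
        (Nat.choose (n-k-1) (k+1+x-k-1) : ℚ) * (Nat.choose (n-1+k) (k+1+x-1) : ℚ)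
        = B (n-k-1) (x:ℤ) * B (n-1+k) (((n-1:ℕ):ℤ) - x) := by
      intro x hx
      simp only [mem_range] at hx
      rw [show k+1+x-k-1 = x by omega, show k+1+x-1 = k+x by omega,
        show ((n-1:ℕ):ℤ) - (x:ℤ) = ((n-1+k:ℕ):ℤ) - ((k+x:ℕ):ℤ) by omega, Bsymm,
        Bcast, Bcast]
    rw [Finset.sum_congr rfl step, Bvand (n-k-1) (n-1+k) (((n-1:ℕ):ℤ)),
      show (n-k-1)+(n-1+k) = 2*n-2 by omega, Bcast]
  rw [Finset.sum_congr rfl inner_eval, Finset.sum_const, Nat.card_Icc,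
    show n-1+1-1 = n-1 by omega, nsmul_eq_mul, Nat.cast_sub (by omega : 1 ≤ n)]
  norm_num

lemma Vpart (p q c : ℕ) :
    ∑ a ∈ Finset.Icc 1 p, (Nat.choose (p+1) a : ℚ) * (Nat.choose q (c+a) : ℚ)
      = (Nat.choose (p+1+q) (c+p+1) : ℚ) - (Nat.choose q c : ℚ) - (Nat.choose q (c+p+1) : ℚ) := by
  have full : ∑ x ∈ range (p+2), B (p+1) (x:ℤ) * B q (((c+p+1:ℕ):ℤ) - x)
      = (Nat.choose (p+1+q) (c+p+1) : ℚ) := by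
    rw [show p+2 = (p+1)+1 by omega, Bvand (p+1) q (((c+p+1:ℕ):ℤ)), Bcast]
  have refl := Finset.sum_range_reflect
    (fun x => B (p+1) (x:ℤ) * B q (((c+p+1:ℕ):ℤ) - x)) (p+2)
  rw [← refl] at full
  have step : ∀ x ∈ range (p+2),
      B (p+1) ((p+2-1-x : ℕ):ℤ) * B q (((c+p+1:ℕ):ℤ) - ((p+2-1-x : ℕ):ℤ))
      = (Nat.choose (p+1) x : ℚ) * (Nat.choose q (c+x) : ℚ) := by
    intro x hx
    simp only [mem_range] at hx
    rw [show ((p+2-1-x : ℕ):ℤ) = ((p+1:ℕ):ℤ) - (x:ℤ) by omega, Bsymm,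
      show ((c+p+1:ℕ):ℤ) - (((p+1:ℕ):ℤ) - (x:ℤ)) = ((c+x:ℕ):ℤ) by push_cast; ring,
      Bcast, Bcast]
  rw [Finset.sum_congr rfl step] at full
  rw [Finset.sum_range_succ, Finset.sum_range_succ'] at full
  have e0 : (Nat.choose (p+1) 0 : ℚ) * (Nat.choose q (c+0) : ℚ) = (Nat.choose q c : ℚ) := by
    simp
  have etop : (Nat.choose (p+1) (p+1) : ℚ) * (Nat.choose q (c+(p+1)) : ℚ)
      = (Nat.choose q (c+p+1) : ℚ) := by
    rw [Nat.choose_self, show c+(p+1) = c+p+1 by omega]; norm_num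
  rw [e0, etop] at full
  have conv : ∑ a ∈ Finset.Icc 1 p, (Nat.choose (p+1) a : ℚ) * (Nat.choose q (c+a) : ℚ)
      = ∑ x ∈ range p, (Nat.choose (p+1) (x+1) : ℚ) * (Nat.choose q (c+(x+1)) : ℚ) := by
    rw [← Finset.Ico_add_one_right_eq_Icc, Finset.sum_Ico_eq_sum_range, show p+1-1 = p by omega]
    apply Finset.sum_congr rfl
    intro x _
    rw [show 1+x = x+1 by omega]
  rw [conv]
  linarith [full]

lemma T2eq (n : ℕ) (hn : 3 ≤ n) :
    (∑ i ∈ Finset.Icc 2 n, ∑ j ∈ Finset.Icc i (n - 1),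
        (Nat.choose (i - 1 + n - j) (i - 1) : ℚ) *
          ((Nat.choose (n - i + j) j : ℚ) - (Nat.choose (n - i + j) (j + 1) : ℚ)))
    = ((n:ℚ)-2) * ((Nat.choose (2*n-1) n : ℚ) - (Nat.choose (2*n-1) (n+1) : ℚ))
      - (Nat.choose (2*n-2) n : ℚ) + 1 - (Nat.choose (2*n-2) (n+1) : ℚ)
      + (Nat.choose (2*n-2) (n-1) : ℚ) - (n:ℚ) + (Nat.choose (2*n-2) (n+2) : ℚ) := by
  -- reindex (i,j) -> (s,a) with a = i-1, s = i-1 + (n-1-j)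
  have swap : (∑ i ∈ Finset.Icc 2 n, ∑ j ∈ Finset.Icc i (n - 1),
        (Nat.choose (i - 1 + n - j) (i - 1) : ℚ) *
          ((Nat.choose (n - i + j) j : ℚ) - (Nat.choose (n - i + j) (j + 1) : ℚ)))
      = ∑ s ∈ Finset.Icc 1 (n-2), ∑ a ∈ Finset.Icc 1 s,
        (Nat.choose (s+1) a : ℚ) *
          ((Nat.choose (2*n-2-s) (n-1-s+a) : ℚ) - (Nat.choose (2*n-2-s) (n-s+a) : ℚ)) := by
    rw [Finset.sum_sigma', Finset.sum_sigma']
    refine Finset.sum_nbij' (fun p => ⟨p.1 - 1 + (n - 1 - p.2), p.1 - 1⟩)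
      (fun p => ⟨p.2 + 1, n - 1 - (p.1 - p.2)⟩) ?_ ?_ ?_ ?_ ?_
    · rintro ⟨i, j⟩ h
      simp only [Finset.mem_sigma, Finset.mem_Icc] at h ⊢
      omega
    · rintro ⟨s, a⟩ h
      simp only [Finset.mem_sigma, Finset.mem_Icc] at h ⊢
      omega
    · rintro ⟨i, j⟩ h
      simp only [Finset.mem_sigma, Finset.mem_Icc] at h
      have h1 : i - 1 + (n - 1 - j) - (i - 1) = n - 1 - j := by omega
      simp only [h1]
      have h2 : i - 1 + 1 = i := by omega
      have h3 : n - 1 - (n - 1 - j) = j := by omega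
      simp only [h2, h3]
    · rintro ⟨s, a⟩ h
      simp only [Finset.mem_sigma, Finset.mem_Icc] at h
      have h1 : a + 1 - 1 = a := by omega
      simp only [h1]
      have h2 : a + (n - 1 - (n - 1 - (s - a))) = s := by omega
      have h3 : n - 1 - (n - 1 - (s - a)) = s - a := by omega
      simp only [h3]
      have h4 : a + (s - a) = s := by omega
      simp only [h4]
    · rintro ⟨i, j⟩ h
      simp only [Finset.mem_sigma, Finset.mem_Icc] at h
      simp only
      rw [show i - 1 + (n-1-j) + 1 = i - 1 + n - j by omega,
        show 2*n-2-(i-1+(n-1-j)) = n - i + j by omega,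
        show n-1-(i-1+(n-1-j)) + (i-1) = j by omega,
        show n-(i-1+(n-1-j)) + (i-1) = j+1 by omega]
  rw [swap]
  have inner_eval : ∀ s ∈ Finset.Icc 1 (n-2),
      ∑ a ∈ Finset.Icc 1 s, (Nat.choose (s+1) a : ℚ) *
          ((Nat.choose (2*n-2-s) (n-1-s+a) : ℚ) - (Nat.choose (2*n-2-s) (n-s+a) : ℚ))
      = ((Nat.choose (2*n-1) n : ℚ) - (Nat.choose (2*n-1) (n+1) : ℚ))
        - (Nat.choose (2*n-2-s) (n-1) : ℚ) - (Nat.choose (2*n-2-s) n : ℚ)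
        + (Nat.choose (2*n-2-s) (n-2) : ℚ) + (Nat.choose (2*n-2-s) (n+1) : ℚ) := by
    intro s hs
    simp only [Finset.mem_Icc] at hs
    have expand : ∀ a ∈ Finset.Icc 1 s, (Nat.choose (s+1) a : ℚ) *
          ((Nat.choose (2*n-2-s) (n-1-s+a) : ℚ) - (Nat.choose (2*n-2-s) (n-s+a) : ℚ))
        = (Nat.choose (s+1) a : ℚ) * (Nat.choose (2*n-2-s) (n-1-s+a) : ℚ)
          - (Nat.choose (s+1) a : ℚ) * (Nat.choose (2*n-2-s) (n-s+a) : ℚ) := by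
      intro a _; ring
    rw [Finset.sum_congr rfl expand, Finset.sum_sub_distrib, Vpart s (2*n-2-s) (n-1-s),
      Vpart s (2*n-2-s) (n-s)]
    rw [show s+1+(2*n-2-s) = 2*n-1 by omega, show n-1-s+s+1 = n by omega,
      show n-s+s+1 = n+1 by omega]
    have symm1 : Nat.choose (2*n-2-s) (n-1-s) = Nat.choose (2*n-2-s) (n-1) := by
      rw [← Nat.choose_symm (by omega : n-1 ≤ 2*n-2-s), show 2*n-2-s-(n-1) = n-1-s by omega]
    have symm2 : Nat.choose (2*n-2-s) (n-s) = Nat.choose (2*n-2-s) (n-2) := by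
      rw [← Nat.choose_symm (by omega : n-2 ≤ 2*n-2-s), show 2*n-2-s-(n-2) = n-s by omega]
    rw [symm1, symm2]
    ring
  rw [Finset.sum_congr rfl inner_eval]
  have usum : ∀ r : ℕ, ∑ s ∈ Finset.Icc 1 (n-2), (Nat.choose (2*n-2-s) r : ℚ)
      = (Nat.choose (2*n-2) (r+1) : ℚ) - (Nat.choose n (r+1) : ℚ) := by
    intro r
    have flip : ∑ s ∈ Finset.Icc 1 (n-2), (Nat.choose (2*n-2-s) r : ℚ)
        = ∑ u ∈ Finset.Icc n (2*n-3), (Nat.choose u r : ℚ) := by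
      refine Finset.sum_nbij' (fun s => 2*n-2-s) (fun u => 2*n-2-u) ?_ ?_ ?_ ?_ ?_
      · intro s hs; simp only [Finset.mem_Icc] at hs ⊢; omega
      · intro u hu; simp only [Finset.mem_Icc] at hu ⊢; omega
      · intro s hs; simp only [Finset.mem_Icc] at hs; show 2*n-2-(2*n-2-s) = s; omega
      · intro u hu; simp only [Finset.mem_Icc] at hu; show 2*n-2-(2*n-2-u) = u; omega
      · intro s hs; rfl
    rw [flip, show (Finset.Icc n (2*n-3)) = Finset.Ico n (2*n-2) by
      rw [← Finset.Ico_add_one_right_eq_Icc]; congr 1; omega]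
    rw [hockey r n (2*n-2) (by omega)]
  rw [Finset.sum_add_distrib, Finset.sum_add_distrib, Finset.sum_sub_distrib,
    Finset.sum_sub_distrib, Finset.sum_sub_distrib, usum, usum, usum, usum,
    Finset.sum_const, Finset.sum_const, Nat.card_Icc, show n-2+1-1 = n-2 by omega,
    nsmul_eq_mul, nsmul_eq_mul]
  rw [show n-1+1 = n by omega, show n-2+1 = n-1 by omega]
  rw [Nat.choose_self, Nat.choose_eq_zero_of_lt (by omega : n < n+1),
    Nat.choose_eq_zero_of_lt (by omega : n < n+1+1)]
  have hcn : Nat.choose n (n-1) = n := by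
    rw [← Nat.choose_symm (by omega : n-1 ≤ n), show n-(n-1) = 1 by omega, Nat.choose_one_right]
  rw [hcn, Nat.cast_sub (by omega : 2 ≤ n)]
  push_cast
  ring

lemma T3eq (n : ℕ) (hn : 3 ≤ n) :
    (∑ i ∈ Finset.Icc 2 n, ∑ j ∈ Finset.Icc i n,
        ((∑ t ∈ Finset.range (j - i + 2),
            (Nat.choose (i - 1 + n - j) (i - 1) : ℚ) * (Nat.choose (i - 1 + n - j) (t + i) : ℚ) *
              (Nat.choose (2 * (j - i)) (j - i + 1 - t) : ℚ)) -
          (∑ t ∈ Finset.range (j - i - 2),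
            (Nat.choose (i - 1 + n - j) (i - 1) : ℚ) * (Nat.choose (i - 1 + n - j) (t + i) : ℚ) *
              (Nat.choose (2 * (j - i)) (j - i - 3 - t) : ℚ))))
    = 2 * psum (n-1) (n-2)
      - ((Nat.choose (2*n-2) (n-2) : ℚ) - ((n:ℚ)-1)) + (Nat.choose (2*n-2) (n+2) : ℚ) := by
  -- Step A: inner j-sum to e-sum
  have stepA : ∀ i ∈ Finset.Icc 2 n,
      (∑ j ∈ Finset.Icc i n,
        ((∑ t ∈ Finset.range (j - i + 2),
            (Nat.choose (i - 1 + n - j) (i - 1) : ℚ) * (Nat.choose (i - 1 + n - j) (t + i) : ℚ) *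
              (Nat.choose (2 * (j - i)) (j - i + 1 - t) : ℚ)) -
          (∑ t ∈ Finset.range (j - i - 2),
            (Nat.choose (i - 1 + n - j) (i - 1) : ℚ) * (Nat.choose (i - 1 + n - j) (t + i) : ℚ) *
              (Nat.choose (2 * (j - i)) (j - i - 3 - t) : ℚ))))
      = ∑ e ∈ Finset.range (n + 1 - i),
        ((∑ t ∈ Finset.range (i + e - i + 2),
            (Nat.choose (i - 1 + n - (i+e)) (i - 1) : ℚ) * (Nat.choose (i - 1 + n - (i+e)) (t + i) : ℚ) *
              (Nat.choose (2 * (i + e - i)) (i + e - i + 1 - t) : ℚ)) -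
          (∑ t ∈ Finset.range (i + e - i - 2),
            (Nat.choose (i - 1 + n - (i+e)) (i - 1) : ℚ) * (Nat.choose (i - 1 + n - (i+e)) (t + i) : ℚ) *
              (Nat.choose (2 * (i + e - i)) (i + e - i - 3 - t) : ℚ))) := by
    intro i _
    rw [← Finset.Ico_add_one_right_eq_Icc, Finset.sum_Ico_eq_sum_range]
  rw [Finset.sum_congr rfl stepA]
  rw [sum_comm_dep _ (fun i e => by
    simp only [Finset.mem_Icc, Finset.mem_range]
    constructor
    · rintro ⟨h1, h2⟩; omega
    · rintro ⟨h1, h2⟩; omega : ∀ i e : ℕ,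
      (i ∈ Finset.Icc 2 n ∧ e ∈ Finset.range (n + 1 - i)) ↔
      (e ∈ Finset.range (n-1) ∧ i ∈ Finset.Icc 2 (n - e)))]
  -- per-e evaluation
  have per_e : ∀ e ∈ Finset.range (n-1),
      (∑ i ∈ Finset.Icc 2 (n - e),
        ((∑ t ∈ Finset.range (i + e - i + 2),
            (Nat.choose (i - 1 + n - (i+e)) (i - 1) : ℚ) * (Nat.choose (i - 1 + n - (i+e)) (t + i) : ℚ) *
              (Nat.choose (2 * (i + e - i)) (i + e - i + 1 - t) : ℚ)) -
          (∑ t ∈ Finset.range (i + e - i - 2),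
            (Nat.choose (i - 1 + n - (i+e)) (i - 1) : ℚ) * (Nat.choose (i - 1 + n - (i+e)) (t + i) : ℚ) *
              (Nat.choose (2 * (i + e - i)) (i + e - i - 3 - t) : ℚ))))
      = (∑ t ∈ range (n-1+2), B (2*(n-1-e)) (((n-1-e:ℕ):ℤ)+1+(t:ℤ)) * B (2*e) ((e:ℤ)+1-t)
          - ∑ t ∈ range (n-1+2), B (2*(n-1-e)) (((n-1-e:ℕ):ℤ)+1+(t:ℤ)) * B (2*e) ((e:ℤ)-3-t))
        - (B (n-1+e) ((e:ℤ)+2) - B (2*e) ((e:ℤ)+2))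
        + (B (n-1+e) ((e:ℤ)-2) - B (2*e) ((e:ℤ)-2)) := by
    intro e he
    simp only [Finset.mem_range] at he
    -- Step C: normalize args per i
    have stepC : ∀ i ∈ Finset.Icc 2 (n - e),
        ((∑ t ∈ Finset.range (i + e - i + 2),
            (Nat.choose (i - 1 + n - (i+e)) (i - 1) : ℚ) * (Nat.choose (i - 1 + n - (i+e)) (t + i) : ℚ) *
              (Nat.choose (2 * (i + e - i)) (i + e - i + 1 - t) : ℚ)) -
          (∑ t ∈ Finset.range (i + e - i - 2),
            (Nat.choose (i - 1 + n - (i+e)) (i - 1) : ℚ) * (Nat.choose (i - 1 + n - (i+e)) (t + i) : ℚ) *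
              (Nat.choose (2 * (i + e - i)) (i + e - i - 3 - t) : ℚ)))
        = ((∑ t ∈ Finset.range (e + 2),
            ((Nat.choose (n-1-e) (i - 1) : ℚ) * (Nat.choose (n-1-e) (t + i) : ℚ)) *
              B (2*e) ((e:ℤ)+1-t)) -
          (∑ t ∈ Finset.range (e - 2),
            ((Nat.choose (n-1-e) (i - 1) : ℚ) * (Nat.choose (n-1-e) (t + i) : ℚ)) *
              B (2*e) ((e:ℤ)-3-t))) := by
      intro i hi
      simp only [Finset.mem_Icc] at hi
      rw [show i + e - i + 2 = e + 2 by omega, show i + e - i - 2 = e - 2 by omega]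
      congr 1
      · apply Finset.sum_congr rfl
        intro t ht
        simp only [Finset.mem_range] at ht
        rw [show i - 1 + n - (i+e) = n-1-e by omega, show 2*(i+e-i) = 2*e by omega,
          show i+e-i+1-t = e+1-t by omega,
          show (e:ℤ)+1-(t:ℤ) = ((e+1-t : ℕ):ℤ) by omega, Bcast]
        try ring
      · apply Finset.sum_congr rfl
        intro t ht
        simp only [Finset.mem_range] at ht
        rw [show i - 1 + n - (i+e) = n-1-e by omega, show 2*(i+e-i) = 2*e by omega,
          show i+e-i-3-t = e-3-t by omega,
          show (e:ℤ)-3-(t:ℤ) = ((e-3-t : ℕ):ℤ) by omega, Bcast]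
        try ring
    rw [Finset.sum_congr rfl stepC, Finset.sum_sub_distrib]
    rw [Finset.sum_comm (s := Finset.Icc 2 (n-e)) (t := range (e+2))
        (f := fun i t => ((Nat.choose (n-1-e) (i-1) : ℚ) * (Nat.choose (n-1-e) (t+i) : ℚ)) * B (2*e) ((e:ℤ)+1-t))]
    rw [Finset.sum_comm (s := Finset.Icc 2 (n-e)) (t := range (e-2))
        (f := fun i t => ((Nat.choose (n-1-e) (i-1) : ℚ) * (Nat.choose (n-1-e) (t+i) : ℚ)) * B (2*e) ((e:ℤ)-3-t))]
    -- now: Σ_t Σ_i for both pieces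
    have innerP1 : ∀ t ∈ Finset.range (e+2),
        ∑ i ∈ Finset.Icc 2 (n - e),
          ((Nat.choose (n-1-e) (i - 1) : ℚ) * (Nat.choose (n-1-e) (t + i) : ℚ)) * B (2*e) ((e:ℤ)+1-t)
        = B (2*(n-1-e)) (((n-1-e:ℕ):ℤ)+1+(t:ℤ)) * B (2*e) ((e:ℤ)+1-t)
          - (Nat.choose (n-1-e) (t+1) : ℚ) * B (2*e) ((e:ℤ)+1-t) := by
      intro t _
      rw [← Finset.sum_mul, show n - e = (n-1-e)+1 by omega, innerI (n-1-e) t]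
      try ring
    have innerP2 : ∀ t ∈ Finset.range (e-2),
        ∑ i ∈ Finset.Icc 2 (n - e),
          ((Nat.choose (n-1-e) (i - 1) : ℚ) * (Nat.choose (n-1-e) (t + i) : ℚ)) * B (2*e) ((e:ℤ)-3-t)
        = B (2*(n-1-e)) (((n-1-e:ℕ):ℤ)+1+(t:ℤ)) * B (2*e) ((e:ℤ)-3-t)
          - (Nat.choose (n-1-e) (t+1) : ℚ) * B (2*e) ((e:ℤ)-3-t) := by
      intro t _
      rw [← Finset.sum_mul, show n - e = (n-1-e)+1 by omega, innerI (n-1-e) t]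
      try ring
    rw [Finset.sum_congr rfl innerP1, Finset.sum_congr rfl innerP2,
      Finset.sum_sub_distrib, Finset.sum_sub_distrib]
    -- Q parts by Q1eval / Q2eval
    have q1 : ∑ t ∈ Finset.range (e+2), (Nat.choose (n-1-e) (t+1) : ℚ) * B (2*e) ((e:ℤ)+1-t)
        = B (n-1+e) ((e:ℤ)+2) - B (2*e) ((e:ℤ)+2) := by
      rw [Q1eval (n-1-e) e, show 2*e+(n-1-e) = n-1+e by omega]
    have q2 : ∑ t ∈ Finset.range (e-2), (Nat.choose (n-1-e) (t+1) : ℚ) * B (2*e) ((e:ℤ)-3-t)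
        = B (n-1+e) ((e:ℤ)-2) - B (2*e) ((e:ℤ)-2) := by
      rw [Q2eval (n-1-e) e, show 2*e+(n-1-e) = n-1+e by omega]
    rw [q1, q2]
    -- extend P ranges to range (n-1+2)
    have ext1 : ∑ t ∈ Finset.range (e+2), B (2*(n-1-e)) (((n-1-e:ℕ):ℤ)+1+(t:ℤ)) * B (2*e) ((e:ℤ)+1-t)
        = ∑ t ∈ range (n-1+2), B (2*(n-1-e)) (((n-1-e:ℕ):ℤ)+1+(t:ℤ)) * B (2*e) ((e:ℤ)+1-t) := by
      apply Finset.sum_subset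
      · intro t ht; simp only [Finset.mem_range] at ht ⊢; omega
      · intro t _ ht
        simp only [Finset.mem_range] at ht
        rw [Bneg (by omega : (e:ℤ)+1-(t:ℤ) < 0), mul_zero]
    have ext2 : ∑ t ∈ Finset.range (e-2), B (2*(n-1-e)) (((n-1-e:ℕ):ℤ)+1+(t:ℤ)) * B (2*e) ((e:ℤ)-3-t)
        = ∑ t ∈ range (n-1+2), B (2*(n-1-e)) (((n-1-e:ℕ):ℤ)+1+(t:ℤ)) * B (2*e) ((e:ℤ)-3-t) := by
      apply Finset.sum_subset
      · intro t ht; simp only [Finset.mem_range] at ht ⊢; omega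
      · intro t _ ht
        simp only [Finset.mem_range] at ht
        rw [Bneg (by omega : (e:ℤ)-3-(t:ℤ) < 0), mul_zero]
    rw [ext1, ext2]
    ring
  rw [Finset.sum_congr rfl per_e]
  have pp := PPeval (n-1)
  rw [Finset.sum_add_distrib, Finset.sum_sub_distrib, pp, Finset.sum_sub_distrib,
    Finset.sum_sub_distrib, show n-1-1 = n-2 by omega, HS1 n hn, HS2 n hn]
  have cancel : ∑ e ∈ range (n-1), B (2*e) ((e:ℤ)-2) = ∑ e ∈ range (n-1), B (2*e) ((e:ℤ)+2) := by
    apply Finset.sum_congr rfl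
    intro e _
    rw [show (e:ℤ)-2 = ((2*e:ℕ):ℤ) - ((e:ℤ)+2) by push_cast; ring, Bsymm]
  rw [cancel]
  ring

lemma psum_closed (k : ℕ) : psum (k+2) (k+1)
    = (4:ℚ)^(k+2) - (Nat.choose (2*k+5) (k+2) : ℚ) - (Nat.choose (2*k+5) (k+1) : ℚ) := by
  have half := Nat.sum_range_choose_halfway (k+2)
  have halfQ : ∑ i ∈ range (k+3), (Nat.choose (2*(k+2)+1) i : ℚ) = (4:ℚ)^(k+2) := by
    rw [show ((4:ℚ)^(k+2)) = ((4^(k+2) : ℕ) : ℚ) by push_cast; ring, ← half]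
    push_cast
    rfl
  have expand : ∑ i ∈ range (k+3), (Nat.choose (2*(k+2)+1) i : ℚ)
      = psum (k+2) (k+1) + (Nat.choose (2*k+5) (k+1) : ℚ) + (Nat.choose (2*k+5) (k+2) : ℚ) := by
    rw [show k+3 = (k+1)+1+1 by omega, Finset.sum_range_succ, Finset.sum_range_succ]
    simp only [psum, show 2*(k+2)+1 = 2*k+5 by omega]
  rw [expand] at halfQ
  linarith [halfQ]

/-- Theorem 4 of the paper (formula (A73)): the number `Ω⁺(n) = T₁(n) + T₂(n) + T₃(n)` of
`𝒟`-invariant ideals of the ring `R_n(K,J)` equals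
`2^(2n-1) + (n-1)·C(2n-2,n-1) - (4/n)·C(2n,n-2) - C(2n,n)`. -/
theorem Dinvariant_ideals_count (n : ℕ) (hn : 3 ≤ n) :
    -- T₁
    (∑ i ∈ Finset.Icc 2 n, ∑ j ∈ Finset.Icc 1 (i - 1),
        (Nat.choose (n - i + j - 1) (j - 1) : ℚ) * (Nat.choose (i - 1 + n - j) (i - 1) : ℚ)) +
    -- T₂
    (∑ i ∈ Finset.Icc 2 n, ∑ j ∈ Finset.Icc i (n - 1),
        (Nat.choose (i - 1 + n - j) (i - 1) : ℚ) *
          ((Nat.choose (n - i + j) j : ℚ) - (Nat.choose (n - i + j) (j + 1) : ℚ))) +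
    -- T₃
    (∑ i ∈ Finset.Icc 2 n, ∑ j ∈ Finset.Icc i n,
        ((∑ t ∈ Finset.range (j - i + 2),
            (Nat.choose (i - 1 + n - j) (i - 1) : ℚ) * (Nat.choose (i - 1 + n - j) (t + i) : ℚ) *
              (Nat.choose (2 * (j - i)) (j - i + 1 - t) : ℚ)) -
          (∑ t ∈ Finset.range (j - i - 2),
            (Nat.choose (i - 1 + n - j) (i - 1) : ℚ) * (Nat.choose (i - 1 + n - j) (t + i) : ℚ) *
              (Nat.choose (2 * (j - i)) (j - i - 3 - t) : ℚ)))) =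
    2 ^ (2 * n - 1) + ((n : ℚ) - 1) * (Nat.choose (2 * n - 2) (n - 1) : ℚ) -
      (4 / (n : ℚ)) * (Nat.choose (2 * n) (n - 2) : ℚ) - (Nat.choose (2 * n) n : ℚ) := by

  rw [T1eq n hn, T2eq n hn, T3eq n hn]
  obtain ⟨k, rfl⟩ : ∃ k, n = k + 3 := ⟨n - 3, by omega⟩
  rw [show (k+3)-1 = k+2 by omega, show (k+3)-2 = k+1 by omega,
    show 2*(k+3)-2 = 2*k+4 by omega, show 2*(k+3)-1 = 2*k+5 by omega,
    show 2*(k+3) = 2*k+6 by omega, show (k+3)+1 = k+4 by omega,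
    show (k+3)+2 = k+5 by omega, psum_closed k]
  -- Pascal / symmetry reductions
  have hd1 : (Nat.choose (2*k+5) (k+3) : ℚ)
      = (Nat.choose (2*k+4) (k+2) : ℚ) + (Nat.choose (2*k+4) (k+3) : ℚ) := by
    rw [show 2*k+5 = (2*k+4)+1 by omega, show k+3 = (k+2)+1 by omega, Nat.choose_succ_succ]
    push_cast; ring
  have hd2 : (Nat.choose (2*k+5) (k+4) : ℚ)
      = (Nat.choose (2*k+4) (k+3) : ℚ) + (Nat.choose (2*k+4) (k+4) : ℚ) := by
    rw [show 2*k+5 = (2*k+4)+1 by omega, show k+4 = (k+3)+1 by omega, Nat.choose_succ_succ]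
    push_cast; ring
  have hd0 : (Nat.choose (2*k+5) (k+2) : ℚ) = (Nat.choose (2*k+5) (k+3) : ℚ) := by
    rw [← Nat.choose_symm (by omega : k+3 ≤ 2*k+5), show 2*k+5-(k+3) = k+2 by omega]
  have hdm : (Nat.choose (2*k+5) (k+1) : ℚ) = (Nat.choose (2*k+5) (k+4) : ℚ) := by
    rw [← Nat.choose_symm (by omega : k+4 ≤ 2*k+5), show 2*k+5-(k+4) = k+1 by omega]
  have hf0 : (Nat.choose (2*k+6) (k+3) : ℚ)
      = (Nat.choose (2*k+5) (k+2) : ℚ) + (Nat.choose (2*k+5) (k+3) : ℚ) := by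
    rw [show 2*k+6 = (2*k+5)+1 by omega, show k+3 = (k+2)+1 by omega, Nat.choose_succ_succ]
    push_cast; ring
  have hf2 : (Nat.choose (2*k+6) (k+1) : ℚ)
      = (Nat.choose (2*k+5) (k) : ℚ) + (Nat.choose (2*k+5) (k+1) : ℚ) := by
    rw [show 2*k+6 = (2*k+5)+1 by omega, show k+1 = k+1 by omega, Nat.choose_succ_succ]
    push_cast; ring
  have hs5 : (Nat.choose (2*k+5) k : ℚ) = (Nat.choose (2*k+5) (k+5) : ℚ) := by
    rw [← Nat.choose_symm (by omega : k+5 ≤ 2*k+5), show 2*k+5-(k+5) = k by omega]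
  have hd5 : (Nat.choose (2*k+5) (k+5) : ℚ)
      = (Nat.choose (2*k+4) (k+4) : ℚ) + (Nat.choose (2*k+4) (k+5) : ℚ) := by
    rw [show 2*k+5 = (2*k+4)+1 by omega, show k+5 = (k+4)+1 by omega, Nat.choose_succ_succ]
    push_cast; ring
  have hs1 : (Nat.choose (2*k+4) (k+1) : ℚ) = (Nat.choose (2*k+4) (k+3) : ℚ) := by
    rw [← Nat.choose_symm (by omega : k+3 ≤ 2*k+4), show 2*k+4-(k+3) = k+1 by omega]
  -- ratio relations
  have E1 : (Nat.choose (2*k+4) (k+3) : ℚ) * (k+3)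
      = (Nat.choose (2*k+4) (k+2) : ℚ) * (k+2) := by
    have h := Nat.choose_succ_right_eq (2*k+4) (k+2)
    rw [show 2*k+4-(k+2) = k+2 by omega, show k+2+1 = k+3 by omega] at h
    exact_mod_cast h
  have E2 : (Nat.choose (2*k+4) (k+4) : ℚ) * (k+4)
      = (Nat.choose (2*k+4) (k+3) : ℚ) * (k+1) := by
    have h := Nat.choose_succ_right_eq (2*k+4) (k+3)
    rw [show 2*k+4-(k+3) = k+1 by omega, show k+3+1 = k+4 by omega] at h
    exact_mod_cast h
  have E3 : (Nat.choose (2*k+4) (k+5) : ℚ) * (k+5)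
      = (Nat.choose (2*k+4) (k+4) : ℚ) * k := by
    have h := Nat.choose_succ_right_eq (2*k+4) (k+4)
    rw [show 2*k+4-(k+4) = k by omega, show k+4+1 = k+5 by omega] at h
    exact_mod_cast h
  -- power identity
  have hpow : (2:ℚ)^(2*k+5) = 2 * (4:ℚ)^(k+2) := by
    rw [show (4:ℚ) = 2^2 by norm_num, ← pow_mul, show 2*k+5 = (2*(k+2))+1 by omega, pow_succ]
    ring
  simp only [hf2, hs5, hd5, hdm, hd2, hd0, hd1, hf0, hs1, hpow]
  have hk3 : ((k:ℚ)+3) ≠ 0 := by positivity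
  push_cast
  field_simp
  linear_combination (-((k:ℚ)+3)) * E1 - ((k:ℚ)+1) * E2 + 2 * E3
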